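/- Assume φ ∈ (0,1), ω > 0, μ > 0, b > 0 and r := bφ − μ(1−φ) > 0; set ρ* := (1 − e^{μ(1−φ)ω − bφω})/(1 − e^{−bφω}). Let A = (a_{ij}) be a real 3×3 matrix and suppose u : ℝ → ℝ³ satisfies the Lotka–Volterra competition system at every t ∈ ℝ, is T-periodic for some T > 0, and has all components strictly positive at every time. Suppose (r/b)ω = k T for some positive integer k (equivalently, the ratio η = (ω/T)/(b/r) is the integer k). Then for every s ∈ ℝ there exists a continuous v : [0, ω] → ℝ³ with v(0) = v(ω) = ρ*·u(s), all components of v strictly positive, such that each component of v has derivative −μ·v_i(t) at every t ∈ (0, (1−φ)ω) and v satisfies the Lotka–Volterra competition system at every t ∈ ((1−φ)ω, ω). Moreover, if u is nonconstant, the set {ρ*·u(s) : s ∈ ℝ} of initial values of such positive ω-periodic solutions is infinite; hence the Poincaré map of the seasonal system has more than one positive fixed point. -/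

import Mathlib

/-! Auxiliary definitions for the Lotka–Volterra seasonal construction. -/

noncomputable def lvE (b t1 t : ℝ) : ℝ := Real.exp (b * (t - t1))

noncomputable def lvρ (b t1 C t : ℝ) : ℝ := lvE b t1 t / (lvE b t1 t + C)

noncomputable def lvτ (b t1 C s t : ℝ) : ℝ :=
  s + (Real.log (lvE b t1 t + C) - Real.log (1 + C)) / b

lemma lvE_pos (b t1 t : ℝ) : 0 < lvE b t1 t := Real.exp_pos _

lemma lvD_pos (b t1 t : ℝ) {C : ℝ} (hC : 0 < C) : 0 < lvE b t1 t + C :=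
  add_pos (lvE_pos b t1 t) hC

lemma lvρ_pos (b t1 t : ℝ) {C : ℝ} (hC : 0 < C) : 0 < lvρ b t1 C t :=
  div_pos (lvE_pos b t1 t) (lvD_pos b t1 t hC)

lemma lvE_hasDeriv (b t1 t : ℝ) : HasDerivAt (lvE b t1) (b * lvE b t1 t) t := by
  have h1 : HasDerivAt (fun x : ℝ => b * (x - t1)) b t := by
    simpa using ((hasDerivAt_id t).sub_const t1).const_mul b
  have h2 := h1.exp
  show HasDerivAt (fun x => Real.exp (b * (x - t1))) (b * Real.exp (b * (t - t1))) t
  simpa [lvE, mul_comm] using h2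

lemma lvE_continuous (b t1 : ℝ) : Continuous (lvE b t1) :=
  Real.continuous_exp.comp (by continuity)

lemma lvρ_hasDeriv (b t1 t : ℝ) {C : ℝ} (hC : 0 < C) :
    HasDerivAt (lvρ b t1 C)
      ((b * lvE b t1 t * (lvE b t1 t + C) - lvE b t1 t * (b * lvE b t1 t)) /
        (lvE b t1 t + C) ^ 2) t := by
  have hD := (lvD_pos b t1 t hC).ne'
  have h1 := (lvE_hasDeriv b t1 t).div ((lvE_hasDeriv b t1 t).add_const C) hD
  exact h1

lemma lvτ_hasDeriv (b t1 s t : ℝ) (hb : b ≠ 0) {C : ℝ} (hC : 0 < C) :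
    HasDerivAt (lvτ b t1 C s) (lvρ b t1 C t) t := by
  have hD := (lvD_pos b t1 t hC).ne'
  have h1 := ((((lvE_hasDeriv b t1 t).add_const C).log hD).sub_const
    (Real.log (1 + C))).div_const b
  have h2 := h1.const_add s
  have h3 : b * lvE b t1 t / (lvE b t1 t + C) / b = lvρ b t1 C t := by
    rw [lvρ]; field_simp
  rw [h3] at h2; exact h2

lemma lvρ_continuous (b t1 : ℝ) {C : ℝ} (hC : 0 < C) : Continuous (lvρ b t1 C) :=
  (lvE_continuous b t1).div ((lvE_continuous b t1).add continuous_const)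
    (fun t => (lvD_pos b t1 t hC).ne')

lemma lvτ_continuous (b t1 s : ℝ) {C : ℝ} (hC : 0 < C) : Continuous (lvτ b t1 C s) := by
  refine continuous_const.add (Continuous.div_const (Continuous.sub ?_ continuous_const) b)
  exact ((lvE_continuous b t1).add continuous_const).log (fun t => (lvD_pos b t1 t hC).ne')

lemma lvE_self (b t1 : ℝ) : lvE b t1 t1 = 1 := by simp [lvE]

lemma lvρ_self (b t1 : ℝ) {C : ℝ} : lvρ b t1 C t1 = 1 / (1 + C) := by
  simp [lvρ, lvE_self]

lemma lvτ_self (b t1 s : ℝ) {C : ℝ} : lvτ b t1 C s t1 = s := by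
  simp [lvτ, lvE_self]

theorem stmt_9 (φ ω μ b r ρs : ℝ)
    (hφ0 : 0 < φ) (hφ1 : φ < 1) (hω : 0 < ω) (hμ : 0 < μ) (hb : 0 < b)
    (hr : r = b * φ - μ * (1 - φ)) (hrpos : 0 < r)
    (hρs : ρs = (1 - Real.exp (μ * (1 - φ) * ω - b * φ * ω)) /
      (1 - Real.exp (-(b * φ * ω))))
    (A : Matrix (Fin 3) (Fin 3) ℝ) (u : ℝ → Fin 3 → ℝ) (T : ℝ) (hT : 0 < T)
    (hu : ∀ t : ℝ, ∀ i : Fin 3,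
      HasDerivAt (fun s => u s i) (u t i * (b - ∑ j : Fin 3, A i j * u t j)) t)
    (hper : ∀ t : ℝ, u (t + T) = u t)
    (hpos : ∀ t : ℝ, ∀ i : Fin 3, 0 < u t i)
    (k : ℕ) (hk : 0 < k) (hkT : r / b * ω = (k : ℝ) * T) :
    (∀ s : ℝ, ∃ v : ℝ → Fin 3 → ℝ,
      ContinuousOn v (Set.Icc 0 ω) ∧
      (∀ i : Fin 3, v 0 i = ρs * u s i) ∧
      (∀ i : Fin 3, v ω i = ρs * u s i) ∧
      (∀ t ∈ Set.Icc (0 : ℝ) ω, ∀ i : Fin 3, 0 < v t i) ∧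
      (∀ t ∈ Set.Ioo (0 : ℝ) ((1 - φ) * ω), ∀ i : Fin 3,
        HasDerivAt (fun s => v s i) (-μ * v t i) t) ∧
      (∀ t ∈ Set.Ioo ((1 - φ) * ω) ω, ∀ i : Fin 3,
        HasDerivAt (fun s => v s i) (v t i * (b - ∑ j : Fin 3, A i j * v t j)) t)) ∧
    ((∃ t₁ t₂ : ℝ, u t₁ ≠ u t₂) →
      (Set.range fun s : ℝ => (fun i : Fin 3 => ρs * u s i)).Infinite) := by
  have h1φ : 0 < 1 - φ := by linarith
  set α := Real.exp (-(b * φ * ω)) with hαdef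
  set l := Real.exp (-(μ * (1 - φ) * ω)) with hldef
  have hα0 : 0 < α := Real.exp_pos _
  have hl0 : 0 < l := Real.exp_pos _
  have hα1 : α < 1 := by
    rw [hαdef]
    have h' : 0 < b * φ * ω := by positivity
    have : -(b * φ * ω) < 0 := by linarith
    calc Real.exp (-(b * φ * ω)) < Real.exp 0 := Real.exp_lt_exp.mpr this
      _ = 1 := Real.exp_zero
  have hl1 : l < 1 := by
    rw [hldef]
    have h' : 0 < μ * (1 - φ) * ω := by positivity
    have : -(μ * (1 - φ) * ω) < 0 := by linarith
    calc Real.exp (-(μ * (1 - φ) * ω)) < Real.exp 0 := Real.exp_lt_exp.mpr this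
      _ = 1 := Real.exp_zero
  have hrω : 0 < r * ω := mul_pos hrpos hω
  have hαl : α < l := by
    rw [hαdef, hldef]
    exact Real.exp_lt_exp.mpr (by nlinarith)
  have hlα : 0 < l - α := by linarith
  set C := (1 - l) / (l - α) with hCdef
  have hC0 : 0 < C := div_pos (by linarith) hlα
  have hρs2 : ρs = (l - α) / (l * (1 - α)) := by
    have hE : Real.exp (μ * (1 - φ) * ω - b * φ * ω) = α / l := by
      rw [hαdef, hldef, ← Real.exp_sub]; ring_nf
    rw [hρs, hE]
    rw [div_eq_div_iff (by linarith : (0:ℝ) < 1 - α).ne' (mul_pos hl0 (by linarith : (0:ℝ) < 1 - α)).ne']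
    field_simp
  have hρs0 : 0 < ρs := by
    rw [hρs2]; exact div_pos hlα (mul_pos hl0 (by linarith))
  have h1C : 1 + C = (1 - α) / (l - α) := by
    rw [hCdef]; field_simp; ring
  have h1C0 : 0 < 1 + C := by linarith
  have hlρs : l * ρs = (l - α) / (1 - α) := by
    have h1 : (1:ℝ) - α ≠ 0 := by linarith
    rw [hρs2]
    field_simp
  constructor
  · -- first part: construction of the seasonal solution
    intro s
    set t1 : ℝ := (1 - φ) * ω with ht1def
    have ht10 : 0 < t1 := by positivity
    have ht1ω : t1 < ω := by nlinarith
    refine ⟨fun t i => if t < t1 then ρs * Real.exp (-(μ * t)) * u s i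
      else lvρ b t1 C t * u (lvτ b t1 C s t) i, ?_, ?_, ?_, ?_, ?_, ?_⟩
    · -- continuity
      have hucont : ∀ i : Fin 3, Continuous fun t => u t i := fun i =>
        continuous_iff_continuousAt.mpr fun t => (hu t i).differentiableAt.continuousAt
      refine Continuous.continuousOn (continuous_pi fun i => ?_)
      refine Continuous.if ?_ (by fun_prop) ((lvρ_continuous b t1 hC0).mul
          ((hucont i).comp (lvτ_continuous b t1 s hC0)))
      · intro x hx
        have hx1 : x = t1 := by
          have hf : frontier {a : ℝ | a < t1} = {t1} := by
            rw [show {a : ℝ | a < t1} = Set.Iio t1 from rfl, frontier_Iio]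
          rw [hf] at hx
          exact hx
        subst hx1
        rw [lvρ_self, lvτ_self]
        have hexp : Real.exp (-(μ * t1)) = l := by
          rw [hldef]; congr 1; rw [ht1def]; ring
        have h1 : (1 : ℝ) / (1 + C) = l * ρs := by
          rw [h1C, hlρs]; field_simp
        rw [hexp, mul_comm ρs l, ← h1]
    · -- value at 0
      intro i
      simp only [if_pos ht10]
      simp
    · -- value at ω
      intro i
      simp only [if_neg (not_lt.mpr ht1ω.le)]
      have hEω : lvE b t1 ω = 1 / α := by
        rw [hαdef, lvE, one_div, ← Real.exp_neg]
        congr 1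
        rw [ht1def]; ring
      have hDω : lvE b t1 ω + C = l * (1 + C) / α := by
        rw [hEω]
        have h1Cα : 1 + C * α = l * (1 + C) := by
          rw [h1C, hCdef]
          field_simp
          ring
        field_simp
        linarith [h1Cα]
      have hρω : lvρ b t1 C ω = ρs := by
        rw [lvρ, hDω, hEω, hρs2, h1C]
        have h1 : (1:ℝ) - α ≠ 0 := by linarith
        have h2 : l - α ≠ 0 := hlα.ne'
        field_simp
      have hτω : lvτ b t1 C s ω = s + (k : ℝ) * T := by
        rw [lvτ, hDω]
        rw [Real.log_div (by positivity) hα0.ne', Real.log_mul hl0.ne' h1C0.ne']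
        rw [hldef, hαdef, Real.log_exp, Real.log_exp]
        rw [← hkT, hr]
        field_simp
        ring
      have hperk : ∀ (n : ℕ) (x : ℝ), u (x + (n : ℝ) * T) = u x := by
        intro n
        induction n with
        | zero => intro x; simp
        | succ m ih =>
          intro x
          have hx : x + ((m : ℝ) + 1) * T = (x + T) + (m : ℝ) * T := by ring
          push_cast
          rw [hx, ih (x + T), hper x]
      rw [hρω, hτω, hperk k s]
    · -- positivity
      intro t _ i
      by_cases h : t < t1
      · simp only [if_pos h]
        have := Real.exp_pos (-(μ * t))
        have := hpos s i
        positivity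
      · simp only [if_neg h]
        exact mul_pos (lvρ_pos b t1 t hC0) (hpos _ i)
    · -- death phase ODE
      intro t ht i
      have hmem : Set.Iio t1 ∈ nhds t := Iio_mem_nhds ht.2
      have heq : (fun x => if x < t1 then ρs * Real.exp (-(μ * x)) * u s i
          else lvρ b t1 C x * u (lvτ b t1 C s x) i) =ᶠ[nhds t]
          (fun x => ρs * Real.exp (-(μ * x)) * u s i) := by
        filter_upwards [hmem] with x hx
        have hx' : x < t1 := hx
        rw [if_pos hx']
      have h1 : HasDerivAt (fun x : ℝ => -(μ * x)) (-μ) t := by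
        simpa using ((hasDerivAt_neg t).const_mul μ)
      have h2 := (h1.exp.const_mul ρs).mul_const (u s i)
      have h3 : HasDerivAt (fun x => ρs * Real.exp (-(μ * x)) * u s i)
          (-μ * (ρs * Real.exp (-(μ * t)) * u s i)) t := by
        convert h2 using 1
        · rfl
        · rfl
        ring
      have h4 := h3.congr_of_eventuallyEq heq
      simp only [if_pos ht.2]
      exact h4
    · -- Lotka–Volterra phase ODE
      intro t ht i
      have hnt : ¬ t < t1 := not_lt.mpr ht.1.le
      have hmem : Set.Ioi t1 ∈ nhds t := Ioi_mem_nhds ht.1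
      have heq : (fun x => if x < t1 then ρs * Real.exp (-(μ * x)) * u s i
          else lvρ b t1 C x * u (lvτ b t1 C s x) i) =ᶠ[nhds t]
          (fun x => lvρ b t1 C x * u (lvτ b t1 C s x) i) := by
        filter_upwards [hmem] with x hx
        have hx' : t1 < x := hx
        rw [if_neg (not_lt.mpr hx'.le)]
      set y := lvτ b t1 C s t with hydef
      have hud : HasDerivAt (fun x => u x i)
          (u y i * (b - ∑ j : Fin 3, A i j * u y j)) y := hu y i
      have hcomp : HasDerivAt (fun x => u (lvτ b t1 C s x) i)
          ((u y i * (b - ∑ j : Fin 3, A i j * u y j)) * lvρ b t1 C t) t :=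
        by have := hud.comp t (lvτ_hasDeriv b t1 s t hb.ne' hC0); exact this
      have hprod := (lvρ_hasDeriv b t1 t hC0).mul hcomp
      have hfinal := hprod.congr_of_eventuallyEq heq
      have hsum : ∑ j : Fin 3, A i j * (lvρ b t1 C t * u y j) =
          lvρ b t1 C t * ∑ j : Fin 3, A i j * u y j := by
        rw [Finset.mul_sum]
        exact Finset.sum_congr rfl fun j _ => by ring
      have hval : (fun x : ℝ => (i : Fin 3) → ℝ) = (fun x : ℝ => (i : Fin 3) → ℝ) := rfl
      simp only [if_neg hnt, ← hydef]
      convert hfinal using 1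
      · rfl
      · rfl
      rw [hsum]
      have hD := (lvD_pos b t1 t hC0).ne'
      set Et := lvE b t1 t with hEt
      set St := ∑ j : Fin 3, A i j * u y j with hSt
      rw [lvρ]
      rw [← hEt]
      field_simp
      ring
  · -- second part: infinitely many initial values
    rintro ⟨t₁, t₂, hne⟩
    have hex : ∃ i : Fin 3, u t₁ i ≠ u t₂ i := by
      by_contra h
      push_neg at h
      exact hne (funext h)
    obtain ⟨i, hi⟩ := hex
    have hucont : Continuous fun t => u t i :=
      continuous_iff_continuousAt.mpr fun t => (hu t i).differentiableAt.continuousAt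
    have h1 : (Set.range fun t => u t i).Infinite := by
      have hsub : Set.uIcc (u t₁ i) (u t₂ i) ⊆ (fun t => u t i) '' Set.uIcc t₁ t₂ :=
        intermediate_value_uIcc hucont.continuousOn
      have hinf : (Set.uIcc (u t₁ i) (u t₂ i)).Infinite :=
        Set.Icc_infinite (min_lt_max.mpr hi)
      refine Set.Infinite.mono ?_ (hinf.mono hsub)
      exact Set.image_subset_range _ _
    have hρsne : ρs ≠ 0 := hρs0.ne'
    have h2 : (Set.range fun t => ρs * u t i).Infinite := by
      have : (Set.range fun t => ρs * u t i) = (fun x => ρs * x) '' Set.range fun t => u t i := by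
        rw [← Set.range_comp]; rfl
      rw [this]
      exact h1.image ((mul_right_injective₀ hρsne).injOn)
    by_contra hfin
    rw [Set.not_infinite] at hfin
    have : (Set.range fun t => ρs * u t i) =
        (fun w : Fin 3 → ℝ => w i) '' Set.range (fun s : ℝ => (fun i : Fin 3 => ρs * u s i)) := by
      rw [← Set.range_comp]; rfl
    rw [this] at h2
    exact h2 (hfin.image _)
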